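/- Set G^(2) := G^(2)_{SS} + G^(2)_{AA}. Then G^(2) is an idempotent, and Tr(G^(2)) = 2, Tr(G^(2)_{SS}) = 1, Tr(G^(2)_{AA}) = 1, and Tr(Q^(2)) = 1. -/

import Mathlib

open Matrix Kronecker

namespace WBA

/-- Configurations of `p` qudits of local dimension `d`. -/
abbrev Conf (d p : ℕ) := Fin p → Fin d

/-- Operators on `H = (ℂ^d)^{⊗ 2p}`, indexed by pairs (unprimed configuration, primed
configuration). -/
abbrev Op (d p : ℕ) := Matrix (Conf d p × Conf d p) (Conf d p × Conf d p) ℂ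

/-- The projector `P⁺_{a,c'}` onto the maximally entangled state between unprimed system `a`
and primed system `c`, tensored with the identity elsewhere. -/
noncomputable def Pplus (d p : ℕ) (a c : Fin p) : Op d p :=
  Matrix.of fun xy uv =>
    if xy.1 a = xy.2 c ∧ uv.1 a = uv.2 c ∧ (∀ j, j ≠ a → xy.1 j = uv.1 j) ∧
        (∀ j, j ≠ c → xy.2 j = uv.2 j) then
      (d : ℂ)⁻¹
    else 0

/-- `d • P⁺_{a,c'}`, i.e. the partially transposed swap `V^{t_{c'}}_{(a,c')}`. -/
noncomputable def arc (d p : ℕ) (a c : Fin p) : Op d p := (d : ℂ) • Pplus d p a c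

/-- `V^(k) = ∏_{j=p-k+1}^{p} (d • P⁺_{j,j'})` (product over the last `k` systems;
`V^(0) = 1`). -/
noncomputable def Vop (d p k : ℕ) : Op d p :=
  (((List.range p).filter (fun j => decide (p - k ≤ j))).map
    (fun j => if h : j < p then arc d p ⟨j, h⟩ ⟨j, h⟩ else 1)).prod

/-- `Q^(p) = d^{-p} V^(p)` and `Q^(k) = d^{-k} V^(k) - d^{-(k+1)} V^(k+1)` for `k < p`. -/
noncomputable def Qop (d p k : ℕ) : Op d p :=
  if k = p then ((d : ℂ) ^ p)⁻¹ • Vop d p p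
  else ((d : ℂ) ^ k)⁻¹ • Vop d p k - ((d : ℂ) ^ (k + 1))⁻¹ • Vop d p (k + 1)

/-- Permutation matrix on `(ℂ^d)^{⊗ n}`: sends `e_v` to `e_{v ∘ σ⁻¹}`. -/
noncomputable def permMat (d n : ℕ) (σ : Equiv.Perm (Fin n)) :
    Matrix (Fin n → Fin d) (Fin n → Fin d) ℂ :=
  Matrix.of fun x u => if x = u ∘ ⇑σ⁻¹ then 1 else 0

/-- `V_σ`: permutation of the unprimed factors, identity on the primed factors. -/
noncomputable def VL (d p : ℕ) (σ : Equiv.Perm (Fin p)) : Op d p :=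
  (permMat d p σ) ⊗ₖ (1 : Matrix (Conf d p) (Conf d p) ℂ)

/-- `V'_τ`: permutation of the primed factors, identity on the unprimed factors. -/
noncomputable def VR (d p : ℕ) (τ : Equiv.Perm (Fin p)) : Op d p :=
  (1 : Matrix (Conf d p) (Conf d p) ℂ) ⊗ₖ (permMat d p τ)

/-- Identification of `H` with `(ℂ^d)^{⊗ (p+p)}`. -/
def glue (d p : ℕ) : (Conf d p × Conf d p) ≃ (Fin (p + p) → Fin d) :=
  (Equiv.sumArrowEquivProdArrow (Fin p) (Fin p) (Fin d)).symm.trans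
    (Equiv.arrowCongr finSumFinEquiv (Equiv.refl (Fin d)))

/-- The permutation operator `W_π`, `π ∈ S_{2p}`, permuting all `2p` tensor factors of `H`. -/
noncomputable def Wfull (d p : ℕ) (π : Equiv.Perm (Fin (p + p))) : Op d p :=
  (permMat d (p + p) π).submatrix (glue d p) (glue d p)

/-- Partial transpose over the `p` primed factors:
`⟨x,y|M^Γ|u,v⟩ = ⟨x,v|M|u,y⟩`. -/
noncomputable def ptrans (d p : ℕ) (M : Op d p) : Op d p :=
  Matrix.of fun xy uv => M (xy.1, uv.2) (uv.1, xy.2)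

/-- The algebra `A^d_{p,p}` of partially transposed permutation operators, as a
linear subspace of `End(H)`. -/
noncomputable def Apt (d p : ℕ) : Submodule ℂ (Op d p) :=
  Submodule.span ℂ {M | ∃ π : Equiv.Perm (Fin (p + p)), M = ptrans d p (Wfull d p π)}

/-- Extension of an operator on systems `1,…,p-r,1',…,(p-r)'` by the identity on the
remaining systems. -/
noncomputable def embed (d p r : ℕ) (M : Op d (p - r)) : Op d p :=
  Matrix.of fun xy uv =>
    M (xy.1 ∘ Fin.castLE (Nat.sub_le p r), xy.2 ∘ Fin.castLE (Nat.sub_le p r))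
      (uv.1 ∘ Fin.castLE (Nat.sub_le p r), uv.2 ∘ Fin.castLE (Nat.sub_le p r)) *
    (if ∀ j : Fin p, p - r ≤ (j : ℕ) → xy.1 j = uv.1 j ∧ xy.2 j = uv.2 j then 1 else 0)

/-- The ideal `M̃^(k) = span{ V_σ V'_τ Q^(k) V_π V'_ρ }` of `A^d_{p,p}`. -/
noncomputable def Mtil (d p k : ℕ) : Submodule ℂ (Op d p) :=
  Submodule.span ℂ {M | ∃ σ τ π ρ : Equiv.Perm (Fin p),
    M = VL d p σ * VR d p τ * Qop d p k * (VL d p π * VR d p ρ)}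

/-- Labels for the two irreps of `S_2`: symmetric `S` and antisymmetric `A`. -/
inductive SA
  | S
  | A
deriving DecidableEq

instance : Fintype SA := ⟨{SA.S, SA.A}, fun x => by cases x <;> simp⟩

/-- The swap operator on `ℂ^d ⊗ ℂ^d`. -/
noncomputable def Fsw (d : ℕ) : Matrix (Conf d 2) (Conf d 2) ℂ :=
  Matrix.of fun x u => if x 0 = u 1 ∧ x 1 = u 0 then 1 else 0

/-- Symmetric and antisymmetric projectors on `ℂ^d ⊗ ℂ^d`. -/
noncomputable def Esm (d : ℕ) : SA → Matrix (Conf d 2) (Conf d 2) ℂ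
  | SA.S => (2 : ℂ)⁻¹ • (1 + Fsw d)
  | SA.A => (2 : ℂ)⁻¹ • (1 - Fsw d)

/-- `E_i ⊗ E_j` on `H = (ℂ^d)^{⊗4}`. -/
noncomputable def EE (d : ℕ) (i j : SA) : Op d 2 := (Esm d i) ⊗ₖ (Esm d j)

/-- `E_i ⊗ 1` on `H = (ℂ^d)^{⊗4}`. -/
noncomputable def EId (d : ℕ) (i : SA) : Op d 2 :=
  (Esm d i) ⊗ₖ (1 : Matrix (Conf d 2) (Conf d 2) ℂ)

/-- Multiplicities `m_S = d(d+1)/2`, `m_A = d(d-1)/2` (real valued). -/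
noncomputable def mR (d : ℕ) : SA → ℝ
  | SA.S => (d : ℝ) * ((d : ℝ) + 1) / 2
  | SA.A => (d : ℝ) * ((d : ℝ) - 1) / 2

/-- Multiplicities `m_S = d(d+1)/2`, `m_A = d(d-1)/2` (complex valued). -/
noncomputable def mC (d : ℕ) : SA → ℂ
  | SA.S => (d : ℂ) * ((d : ℂ) + 1) / 2
  | SA.A => (d : ℂ) * ((d : ℂ) - 1) / 2

/-- `V^(1) = d • P⁺_{2,2'}` for `p = 2`. -/
noncomputable def V1 (d : ℕ) : Op d 2 := arc d 2 1 1

/-- `V^(2) = d² • P⁺_{2,2'} P⁺_{1,1'}` for `p = 2`. -/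
noncomputable def V2 (d : ℕ) : Op d 2 := arc d 2 1 1 * arc d 2 0 0

/-- `Q^(2) = d^{-2} V^(2)` for `p = 2`. -/
noncomputable def Q2 (d : ℕ) : Op d 2 := ((d : ℂ) ^ 2)⁻¹ • V2 d

/-- `Q^(1) = d^{-1} V^(1) - d^{-2} V^(2)` for `p = 2`. -/
noncomputable def Q1 (d : ℕ) : Op d 2 :=
  (d : ℂ)⁻¹ • V1 d - ((d : ℂ) ^ 2)⁻¹ • V2 d

/-- `G^(2)_{kl} = (d²/√(m_k m_l)) (E_k ⊗ 1) Q^(2) (E_l ⊗ 1)`. -/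
noncomputable def G2 (d : ℕ) (k l : SA) : Op d 2 :=
  ((d : ℂ) ^ 2 / ((Real.sqrt (mR d k * mR d l) : ℝ) : ℂ)) • (EId d k * Q2 d * EId d l)

/-- `G^(2) = G^(2)_{SS} + G^(2)_{AA}`. -/
noncomputable def G2sum (d : ℕ) : Op d 2 := G2 d SA.S SA.S + G2 d SA.A SA.A

/-- The Gram coefficients `b_{SS} = (d+2)/(4d)`, `b_{SA} = b_{AS} = 1/4`,
`b_{AA} = (d-2)/(4d)`. -/
noncomputable def bc (d : ℕ) : SA → SA → ℂ
  | SA.S, SA.S => ((d : ℂ) + 2) / (4 * (d : ℂ))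
  | SA.S, SA.A => 1 / 4
  | SA.A, SA.S => 1 / 4
  | SA.A, SA.A => ((d : ℂ) - 2) / (4 * (d : ℂ))

/-- `Ĝ^(1)_{[ij][kl]} = (E_i ⊗ E_j) Q^(1) (E_k ⊗ E_l)`. -/
noncomputable def Ghat1 (d : ℕ) (i j k l : SA) : Op d 2 :=
  EE d i j * Q1 d * EE d k l

/-- `G^(1)_{[ij][kl]} = b_{ij}⁻¹ Ĝ^(1)_{[ij][kl]}`. -/
noncomputable def G1 (d : ℕ) (i j k l : SA) : Op d 2 := (bc d i j)⁻¹ • Ghat1 d i j k l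

/-- `G^(1) = Σ_{ij} G^(1)_{[ij][ij]}`. -/
noncomputable def G1sum (d : ℕ) : Op d 2 := ∑ i : SA, ∑ j : SA, G1 d i j i j

/-- `G^(0)_{ij} = E_i⊗E_j - b_{ij}⁻¹ (E_i⊗E_j)Q^(1)(E_i⊗E_j)
- δ_{ij} (d²/m_i) (E_i⊗1)Q^(2)(E_i⊗1)`. -/
noncomputable def G0 (d : ℕ) (i j : SA) : Op d 2 :=
  EE d i j - (bc d i j)⁻¹ • (EE d i j * Q1 d * EE d i j) -
    (if i = j then (d : ℂ) ^ 2 / mC d i else 0) • (EId d i * Q2 d * EId d i)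

section Aux
variable {d : ℕ}

lemma conf_eq_iff (x y : Conf d 2) : x = y ↔ x 0 = y 0 ∧ x 1 = y 1 := by
  constructor
  · rintro rfl; exact ⟨rfl, rfl⟩
  · rintro ⟨h0, h1⟩; funext i; fin_cases i <;> assumption

lemma sum_conf {M : Type*} [AddCommMonoid M] (f : Conf d 2 → M) :
    ∑ x : Conf d 2, f x = ∑ a : Fin d, ∑ b : Fin d, f ![a, b] :=
  calc ∑ x : Conf d 2, f x = ∑ p : Fin d × Fin d, f ![p.1, p.2] :=
        Fintype.sum_equiv (piFinTwoEquiv fun _ => Fin d) _ _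
          (by intro x; congr 1; funext i; fin_cases i <;> rfl)
    _ = _ := Fintype.sum_prod_type _

lemma fsw_mul_fsw : Fsw d * Fsw d = 1 := by
  ext x u
  rw [Matrix.mul_apply]
  rw [Finset.sum_eq_single ![x 1, x 0]]
  · simp [Fsw, Matrix.one_apply, conf_eq_iff x u, and_comm]
  · intro a _ ha
    simp only [Fsw, Matrix.of_apply]
    split_ifs with h1 h2
    · exact absurd ((conf_eq_iff _ _).mpr ⟨h1.2.symm, h1.1.symm⟩) ha
    all_goals simp
  · intro h; exact absurd (Finset.mem_univ _) h

end Aux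
section Aux2
variable {d : ℕ}

lemma trace_fsw : Matrix.trace (Fsw d) = (d : ℂ) := by
  rw [Matrix.trace]
  simp only [Matrix.diag]
  rw [sum_conf (fun x => Fsw d x x)]
  simp only [Fsw, Matrix.of_apply, Matrix.cons_val_zero, Matrix.cons_val_one, Matrix.head_cons]
  simp only [show ∀ a b : Fin d, (a = b ∧ b = a) ↔ a = b from
    fun a b => ⟨And.left, fun h => ⟨h, h.symm⟩⟩]
  simp [Finset.sum_ite_eq]

lemma card_conf : Fintype.card (Conf d 2) = d ^ 2 := by
  simp [Fintype.card_fun]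

lemma trace_esm (k : SA) : Matrix.trace (Esm d k) = mC d k := by
  cases k <;>
    simp [Esm, mC, Matrix.trace_smul, Matrix.trace_add, Matrix.trace_sub,
      Matrix.trace_one, trace_fsw, card_conf] <;> ring

lemma esm_mul_esm (k l : SA) : Esm d k * Esm d l = if k = l then Esm d k else 0 := by
  have h := fsw_mul_fsw (d := d)
  cases k <;> cases l <;>
    simp only [Esm, if_true, if_false, reduceCtorEq, Matrix.smul_mul, Matrix.mul_smul,
      mul_add, add_mul, mul_sub, sub_mul, h, one_mul, mul_one] <;>
    module

lemma trace_esm_mul (k l : SA) :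
    Matrix.trace (Esm d k * Esm d l) = if k = l then mC d k else 0 := by
  rw [esm_mul_esm]
  split_ifs <;> simp [trace_esm]

end Aux2
section Aux3
variable {d : ℕ}

lemma V2_apply (hd : 2 ≤ d) (x y u v : Conf d 2) :
    V2 d (x, y) (u, v) = if x = y ∧ u = v then 1 else 0 := by
  have hd0 : (d : ℂ) ≠ 0 := Nat.cast_ne_zero.mpr (by omega)
  rw [V2, Matrix.mul_apply]
  rw [Finset.sum_eq_single (![x 0, u 1], ![y 0, v 1])]
  · simp only [arc, Pplus, Matrix.smul_apply, Matrix.of_apply, smul_eq_mul,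
      Matrix.cons_val_zero, Matrix.cons_val_one, Matrix.head_cons]
    have hA : ∀ (j : Fin 2), j ≠ 1 → x j = ![x 0, u 1] j := by
      intro j hj; fin_cases j
      · rfl
      · simp at hj
    have hB : ∀ (j : Fin 2), j ≠ 1 → y j = ![y 0, v 1] j := by
      intro j hj; fin_cases j
      · rfl
      · simp at hj
    have hC : ∀ (j : Fin 2), j ≠ 0 → (![x 0, u 1] : Conf d 2) j = u j := by
      intro j hj; fin_cases j
      · simp at hj
      · rfl
    have hD : ∀ (j : Fin 2), j ≠ 0 → (![y 0, v 1] : Conf d 2) j = v j := by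
      intro j hj; fin_cases j
      · simp at hj
      · rfl
    have c1 : (x 1 = y 1 ∧ u 1 = v 1 ∧ (∀ (j : Fin 2), j ≠ 1 → x j = ![x 0, u 1] j) ∧
        ∀ (j : Fin 2), j ≠ 1 → y j = ![y 0, v 1] j) ↔ (x 1 = y 1 ∧ u 1 = v 1) :=
      ⟨fun h => ⟨h.1, h.2.1⟩, fun h => ⟨h.1, h.2, hA, hB⟩⟩
    have c2 : (x 0 = y 0 ∧ u 0 = v 0 ∧ (∀ (j : Fin 2), j ≠ 0 → (![x 0, u 1] : Conf d 2) j = u j) ∧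
        ∀ (j : Fin 2), j ≠ 0 → (![y 0, v 1] : Conf d 2) j = v j) ↔ (x 0 = y 0 ∧ u 0 = v 0) :=
      ⟨fun h => ⟨h.1, h.2.1⟩, fun h => ⟨h.1, h.2, hC, hD⟩⟩
    simp only [c1, c2]
    simp only [conf_eq_iff x y, conf_eq_iff u v]
    by_cases h1 : x 0 = y 0 <;> by_cases h2 : x 1 = y 1 <;>
      by_cases h3 : u 0 = v 0 <;> by_cases h4 : u 1 = v 1 <;>
      simp [h1, h2, h3, h4, hd0]
  · intro b _ hb
    simp only [arc, Pplus, Matrix.smul_apply, Matrix.of_apply, smul_eq_mul]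
    split_ifs with h1 h2
    · exfalso
      apply hb
      obtain ⟨_, _, h13, h14⟩ := h1
      obtain ⟨_, _, h23, h24⟩ := h2
      have e1 : b.1 0 = x 0 := (h13 0 (by decide)).symm
      have e2 : b.2 0 = y 0 := (h14 0 (by decide)).symm
      have e3 : b.1 1 = u 1 := h23 1 (by decide)
      have e4 : b.2 1 = v 1 := h24 1 (by decide)
      ext1
      · exact (conf_eq_iff _ _).mpr ⟨e1, e3⟩
      · exact (conf_eq_iff _ _).mpr ⟨e2, e4⟩
    all_goals simp
  · intro h; exact absurd (Finset.mem_univ _) h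

end Aux3
section Aux4
variable {d : ℕ}

lemma Q2_apply (hd : 2 ≤ d) (x y u v : Conf d 2) :
    Q2 d (x, y) (u, v) = ((d : ℂ) ^ 2)⁻¹ * if x = y ∧ u = v then 1 else 0 := by
  rw [Q2, Matrix.smul_apply, V2_apply hd, smul_eq_mul]

/-- `Ptil k l = (E_k ⊗ 1) (d² Q2) (E_l ⊗ 1)` entrywise. -/
noncomputable def Ptil (d : ℕ) (k l : SA) : Op d 2 :=
  Matrix.of fun xy uv => Esm d k xy.1 xy.2 * Esm d l uv.2 uv.1

lemma eid_q2_eid (hd : 2 ≤ d) (k l : SA) :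
    EId d k * Q2 d * EId d l = ((d : ℂ) ^ 2)⁻¹ • Ptil d k l := by
  have h1 : EId d k * Q2 d = Matrix.of fun (xy uv : Conf d 2 × Conf d 2) =>
      ((d : ℂ) ^ 2)⁻¹ * Esm d k xy.1 xy.2 * if uv.1 = uv.2 then 1 else 0 := by
    ext ⟨x, y⟩ ⟨u, v⟩
    rw [Matrix.mul_apply]
    simp only [Fintype.sum_prod_type, EId, Matrix.kroneckerMap_apply, Matrix.of_apply,
      Matrix.one_apply]
    simp only [Q2_apply hd]
    simp only [mul_ite, ite_mul, mul_zero, zero_mul, mul_one]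
    by_cases huv : u = v <;> simp [huv, Finset.sum_ite_eq, Finset.sum_ite_eq', mul_comm]
  rw [h1]
  ext ⟨x, y⟩ ⟨u, v⟩
  rw [Matrix.mul_apply]
  simp only [Fintype.sum_prod_type, EId, Matrix.kroneckerMap_apply, Matrix.of_apply,
    Matrix.one_apply, Matrix.smul_apply, Ptil, smul_eq_mul]
  simp [mul_ite, ite_mul, mul_zero, zero_mul, mul_one, Finset.sum_ite_eq,
    Finset.sum_ite_eq', mul_comm, mul_assoc]

end Aux4
section Aux5
variable {d : ℕ}

lemma trace_Ptil (k l : SA) :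
    Matrix.trace (Ptil d k l) = Matrix.trace (Esm d k * Esm d l) := by
  simp [Matrix.trace, Matrix.diag, Ptil, Matrix.mul_apply, Fintype.sum_prod_type]

lemma Ptil_mul (k l k' l' : SA) :
    Ptil d k l * Ptil d k' l' = Matrix.trace (Esm d l * Esm d k') • Ptil d k l' := by
  ext ⟨x, y⟩ ⟨u, v⟩
  rw [Matrix.mul_apply]
  simp only [Ptil, Matrix.of_apply, Matrix.smul_apply, smul_eq_mul, Fintype.sum_prod_type,
    Matrix.trace, Matrix.diag, Matrix.mul_apply]
  rw [Finset.sum_mul, Finset.sum_comm]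
  refine Finset.sum_congr rfl fun a _ => ?_
  rw [Finset.sum_mul]
  refine Finset.sum_congr rfl fun b _ => ?_
  ring

lemma mC_ne_zero (hd : 2 ≤ d) (k : SA) : mC d k ≠ 0 := by
  have h1 : ((d : ℂ)) ≠ 0 := Nat.cast_ne_zero.mpr (by omega)
  cases k
  · have h2 : ((d : ℂ) + 1) = ((d + 1 : ℕ) : ℂ) := by push_cast; ring
    simp only [mC]
    exact div_ne_zero (mul_ne_zero h1 (h2 ▸ Nat.cast_ne_zero.mpr (by omega))) two_ne_zero
  · have h2 : ((d : ℂ) - 1) = ((d - 1 : ℕ) : ℂ) := by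
      have : ((d - 1 : ℕ) : ℂ) = (d : ℂ) - 1 := by
        push_cast [Nat.cast_sub (by omega : 1 ≤ d)]; ring
      rw [this]
    simp only [mC]
    exact div_ne_zero (mul_ne_zero h1 (h2 ▸ Nat.cast_ne_zero.mpr (by omega))) two_ne_zero

lemma sqrt_m_eq (hd : 2 ≤ d) (k : SA) :
    ((Real.sqrt (mR d k * mR d k) : ℝ) : ℂ) = mC d k := by
  have hd2 : (2 : ℝ) ≤ (d : ℝ) := by exact_mod_cast hd
  have hnn : 0 ≤ mR d k := by
    cases k <;> simp only [mR] <;> nlinarith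
  rw [Real.sqrt_mul_self hnn]
  cases k <;> simp only [mR, mC] <;> push_cast <;> ring

lemma G2_diag (hd : 2 ≤ d) (k : SA) :
    G2 d k k = (mC d k)⁻¹ • Ptil d k k := by
  have h1 : ((d : ℂ)) ≠ 0 := Nat.cast_ne_zero.mpr (by omega)
  rw [G2, eid_q2_eid hd, sqrt_m_eq hd, smul_smul]
  congr 1
  have h2 := mC_ne_zero hd k
  field_simp

end Aux5
/-- `G^(2) := G^(2)_{SS} + G^(2)_{AA}` is an idempotent, and
`Tr G^(2) = 2`, `Tr G^(2)_{SS} = 1`, `Tr G^(2)_{AA} = 1`, `Tr Q^(2) = 1`. -/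
theorem G2_projector_traces (d : ℕ) (hd : 2 ≤ d) :
    G2sum d * G2sum d = G2sum d ∧
    Matrix.trace (G2sum d) = 2 ∧
    Matrix.trace (G2 d SA.S SA.S) = 1 ∧
    Matrix.trace (G2 d SA.A SA.A) = 1 ∧
    Matrix.trace (Q2 d) = 1 := by
  have h1 : (d : ℂ) ≠ 0 := Nat.cast_ne_zero.mpr (by omega)
  have htr : ∀ k, Matrix.trace (G2 d k k) = 1 := by
    intro k
    rw [G2_diag hd k, Matrix.trace_smul, trace_Ptil, trace_esm_mul, if_pos rfl, smul_eq_mul,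
      inv_mul_cancel₀ (mC_ne_zero hd k)]
  refine ⟨?_, ?_, htr SA.S, htr SA.A, ?_⟩
  · have key : ∀ k l : SA, ((mC d k)⁻¹ • Ptil d k k) * ((mC d l)⁻¹ • Ptil d l l) =
        if k = l then (mC d k)⁻¹ • Ptil d k k else 0 := by
      intro k l
      rw [Matrix.smul_mul, Matrix.mul_smul, Ptil_mul, trace_esm_mul]
      by_cases h : k = l
      · subst h
        simp only [if_pos rfl, ↓reduceIte, smul_smul]
        congr 1
        field_simp [mC_ne_zero hd k]
      · simp [h]
    rw [G2sum, G2_diag hd SA.S, G2_diag hd SA.A, add_mul, mul_add, mul_add,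
      key SA.S SA.S, key SA.S SA.A, key SA.A SA.S, key SA.A SA.A]
    simp
  · rw [G2sum, Matrix.trace_add, htr SA.S, htr SA.A]
    norm_num
  · rw [Matrix.trace]
    simp only [Matrix.diag, Fintype.sum_prod_type]
    simp only [Q2_apply hd, and_self, mul_ite, mul_one, mul_zero]
    simp only [Finset.sum_ite_eq, Finset.mem_univ, if_true, Finset.sum_const,
      Finset.card_univ, card_conf, nsmul_eq_mul]
    push_cast
    exact mul_inv_cancel₀ (pow_ne_zero 2 h1)

end WBA
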